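/- Every connected component of the subgraph of the integer lattice graph Λ induced by a perfect dominating set S is, as a set of vertices, a product I × J of two intervals of integers (i.e., of the form {a,...,b} × {c,...,d}, possibly infinite). -/

import Mathlib

/-- The integer lattice graph on ℤ × ℤ. -/
def latticeGraph : SimpleGraph (ℤ × ℤ) where
  Adj p q := |p.1 - q.1| + |p.2 - q.2| = 1
  symm := ⟨fun p q h => by
    try simp only at h ⊢
    rw [abs_sub_comm q.1 p.1, abs_sub_comm q.2 p.2]; exact h⟩
  loopless := ⟨fun p h => by simp at h⟩

lemma lat_adj_mk (a b c d : ℤ) :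
    latticeGraph.Adj (a, b) (c, d) ↔
      ((c = a + 1 ∧ d = b) ∨ (c = a - 1 ∧ d = b) ∨ (c = a ∧ d = b + 1) ∨ (c = a ∧ d = b - 1)) := by
  show |a - c| + |b - d| = 1 ↔ _
  simp only [Int.abs_eq_natAbs]
  omega

lemma lat_adj_iff (p q : ℤ × ℤ) :
    latticeGraph.Adj p q ↔
      ((q.1 = p.1 + 1 ∧ q.2 = p.2) ∨ (q.1 = p.1 - 1 ∧ q.2 = p.2) ∨
       (q.1 = p.1 ∧ q.2 = p.2 + 1) ∨ (q.1 = p.1 ∧ q.2 = p.2 - 1)) := by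
  obtain ⟨a, b⟩ := p; obtain ⟨c, d⟩ := q
  exact lat_adj_mk a b c d

section
variable {S : Set (ℤ × ℤ)}
  (hc : ∀ ⦃p q r : ℤ × ℤ⦄, p ∈ S → q ∈ S → p ≠ q →
      latticeGraph.Adj r p → latticeGraph.Adj r q → r ∈ S)

include hc

lemma diagFillV (x y dx dy : ℤ) (hdx : dx = 1 ∨ dx = -1) (hdy : dy = 1 ∨ dy = -1)
    (h1 : (x, y) ∈ S) (h2 : (x + dx, y + dy) ∈ S) : (x, y + dy) ∈ S := by
  refine hc h1 h2 ?_ ?_ ?_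
  · simp only [ne_eq, Prod.mk.injEq, not_and]; omega
  · rw [lat_adj_mk]; omega
  · rw [lat_adj_mk]; omega

lemma diagFillH (x y dx dy : ℤ) (hdx : dx = 1 ∨ dx = -1) (hdy : dy = 1 ∨ dy = -1)
    (h1 : (x, y) ∈ S) (h2 : (x + dx, y + dy) ∈ S) : (x + dx, y) ∈ S := by
  refine hc h1 h2 ?_ ?_ ?_
  · simp only [ne_eq, Prod.mk.injEq, not_and]; omega
  · rw [lat_adj_mk]; omega
  · rw [lat_adj_mk]; omega

lemma colExtend (x dx lo hi y0 : ℤ) (hdx : dx = 1 ∨ dx = -1)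
    (hlo : lo ≤ y0) (hhi : y0 ≤ hi) (h0 : (x, y0) ∈ S)
    (hcol : ∀ y : ℤ, lo ≤ y → y ≤ hi → (x + dx, y) ∈ S) :
    ∀ y : ℤ, lo ≤ y → y ≤ hi → (x, y) ∈ S := by
  intro y hy1 hy2
  obtain ⟨dy, hdy, heq⟩ : ∃ dy : ℤ, (dy = 1 ∨ dy = -1) ∧ y = y0 + dy * (y - y0).natAbs := by
    rcases le_total y0 y with h | h
    · exact ⟨1, Or.inl rfl, by omega⟩
    · exact ⟨-1, Or.inr rfl, by omega⟩
  have key : ∀ k : ℕ, (k : ℤ) ≤ (y - y0).natAbs → (x, y0 + dy * k) ∈ S := by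
    intro k
    induction k with
    | zero => intro _; simpa using h0
    | succ k ih =>
      intro hk
      have hik : (x, y0 + dy * k) ∈ S := ih (by omega)
      have hbd1 : lo ≤ y0 + dy * ((k : ℤ) + 1) := by rcases hdy with rfl | rfl <;> omega
      have hbd2 : y0 + dy * ((k : ℤ) + 1) ≤ hi := by rcases hdy with rfl | rfl <;> omega
      have hcm : (x + dx, (y0 + dy * k) + dy) ∈ S := by
        have := hcol (y0 + dy * ((k : ℤ) + 1)) hbd1 hbd2
        have e : y0 + dy * ((k : ℤ) + 1) = (y0 + dy * k) + dy := by ring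
        rwa [e] at this
      have := diagFillV hc x (y0 + dy * k) dx dy hdx hdy hik hcm
      have e : (y0 + dy * k) + dy = y0 + dy * ((k : ℕ) + 1 : ℕ) := by push_cast; ring
      rwa [e] at this
  have := key (y - y0).natAbs le_rfl
  rwa [← heq] at this

lemma rowExtend (y dy lo hi x0 : ℤ) (hdy : dy = 1 ∨ dy = -1)
    (hlo : lo ≤ x0) (hhi : x0 ≤ hi) (h0 : (x0, y) ∈ S)
    (hrow : ∀ x : ℤ, lo ≤ x → x ≤ hi → (x, y + dy) ∈ S) :
    ∀ x : ℤ, lo ≤ x → x ≤ hi → (x, y) ∈ S := by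
  intro x hx1 hx2
  obtain ⟨dx, hdx, heq⟩ : ∃ dx : ℤ, (dx = 1 ∨ dx = -1) ∧ x = x0 + dx * (x - x0).natAbs := by
    rcases le_total x0 x with h | h
    · exact ⟨1, Or.inl rfl, by omega⟩
    · exact ⟨-1, Or.inr rfl, by omega⟩
  have key : ∀ k : ℕ, (k : ℤ) ≤ (x - x0).natAbs → (x0 + dx * k, y) ∈ S := by
    intro k
    induction k with
    | zero => intro _; simpa using h0
    | succ k ih =>
      intro hk
      have hik : (x0 + dx * k, y) ∈ S := ih (by omega)
      have hbd1 : lo ≤ x0 + dx * ((k : ℤ) + 1) := by rcases hdx with rfl | rfl <;> omega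
      have hbd2 : x0 + dx * ((k : ℤ) + 1) ≤ hi := by rcases hdx with rfl | rfl <;> omega
      have hcm : ((x0 + dx * k) + dx, y + dy) ∈ S := by
        have := hrow (x0 + dx * ((k : ℤ) + 1)) hbd1 hbd2
        have e : x0 + dx * ((k : ℤ) + 1) = (x0 + dx * k) + dx := by ring
        rwa [e] at this
      have := diagFillH hc (x0 + dx * k) y dx dy hdx hdy hik hcm
      have e : (x0 + dx * k) + dx = x0 + dx * ((k : ℕ) + 1 : ℕ) := by push_cast; ring
      rwa [e] at this
  have := key (x - x0).natAbs le_rfl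
  rwa [← heq] at this

lemma rectMem {a b : {p : ℤ × ℤ // p ∈ S}} (w : (latticeGraph.induce S).Walk a b) :
    ∀ x y : ℤ, min (a : ℤ × ℤ).1 (b : ℤ × ℤ).1 ≤ x → x ≤ max (a : ℤ × ℤ).1 (b : ℤ × ℤ).1 →
      min (a : ℤ × ℤ).2 (b : ℤ × ℤ).2 ≤ y → y ≤ max (a : ℤ × ℤ).2 (b : ℤ × ℤ).2 →
      (x, y) ∈ S := by
  induction w with
  | nil =>
    rename_i c
    intro x y h1 h2 h3 h4
    have hx : x = (c : ℤ × ℤ).1 := by omega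
    have hy : y = (c : ℤ × ℤ).2 := by omega
    rw [hx, hy]
    exact Prod.mk.eta ▸ c.2
  | cons h w ih =>
    rename_i u c b'
    intro x y h1 h2 h3 h4
    have hadj : latticeGraph.Adj (u : ℤ × ℤ) (c : ℤ × ℤ) := h
    rw [lat_adj_iff] at hadj
    set u1 := (u : ℤ × ℤ).1 with hu1
    set u2 := (u : ℤ × ℤ).2 with hu2
    set b1 := (b' : ℤ × ℤ).1 with hb1
    set b2 := (b' : ℤ × ℤ).2 with hb2
    have huS : (u1, u2) ∈ S := Prod.mk.eta ▸ u.2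
    rcases hadj with ⟨e1, e2⟩ | ⟨e1, e2⟩ | ⟨e1, e2⟩ | ⟨e1, e2⟩ <;> rw [e1, e2] at ih
    · -- c = (u1 + 1, u2)
      by_cases hcase : min (u1 + 1) b1 ≤ x ∧ x ≤ max (u1 + 1) b1
      · exact ih x y hcase.1 hcase.2 h3 h4
      · have hx : x = u1 := by omega
        subst hx
        exact colExtend hc u1 1 (min u2 b2) (max u2 b2) u2 (Or.inl rfl) (by omega) (by omega) huS
          (fun y' hy1 hy2 => ih (u1 + 1) y' (by omega) (by omega) hy1 hy2) y h3 h4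
    · -- c = (u1 - 1, u2)
      by_cases hcase : min (u1 - 1) b1 ≤ x ∧ x ≤ max (u1 - 1) b1
      · exact ih x y hcase.1 hcase.2 h3 h4
      · have hx : x = u1 := by omega
        subst hx
        exact colExtend hc u1 (-1) (min u2 b2) (max u2 b2) u2 (Or.inr rfl) (by omega) (by omega) huS
          (fun y' hy1 hy2 => by
            have := ih (u1 - 1) y' (by omega) (by omega) hy1 hy2
            rwa [show u1 + -1 = u1 - 1 by ring]) y h3 h4
    · -- c = (u1, u2 + 1)
      by_cases hcase : min (u2 + 1) b2 ≤ y ∧ y ≤ max (u2 + 1) b2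
      · exact ih x y h1 h2 hcase.1 hcase.2
      · have hy : y = u2 := by omega
        subst hy
        exact rowExtend hc u2 1 (min u1 b1) (max u1 b1) u1 (Or.inl rfl) (by omega) (by omega) huS
          (fun x' hx1 hx2 => ih x' (u2 + 1) hx1 hx2 (by omega) (by omega)) x h1 h2
    · -- c = (u1, u2 - 1)
      by_cases hcase : min (u2 - 1) b2 ≤ y ∧ y ≤ max (u2 - 1) b2
      · exact ih x y h1 h2 hcase.1 hcase.2
      · have hy : y = u2 := by omega
        subst hy
        exact rowExtend hc u2 (-1) (min u1 b1) (max u1 b1) u1 (Or.inr rfl) (by omega) (by omega) huS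
          (fun x' hx1 hx2 => by
            have := ih x' (u2 - 1) hx1 hx2 (by omega) (by omega)
            rwa [show u2 + -1 = u2 - 1 by ring]) x h1 h2

end

section
variable {S : Set (ℤ × ℤ)}

lemma reachV (n : ℕ) (x y dy : ℤ) (hdy : dy = 1 ∨ dy = -1)
    (h : ∀ k : ℕ, (k : ℤ) ≤ n → (x, y + dy * k) ∈ S) (h0 : (x, y) ∈ S)
    (h1 : (x, y + dy * n) ∈ S) :
    (latticeGraph.induce S).Reachable ⟨(x, y), h0⟩ ⟨(x, y + dy * n), h1⟩ := by
  induction n with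
  | zero =>
    have e : ((x, y + dy * (0 : ℕ)) : ℤ × ℤ) = (x, y) := by simp
    exact SimpleGraph.Reachable.refl _ |>.mono le_rfl |>.trans (by rw [show (⟨(x, y + dy * (0:ℕ)), h1⟩ : {p // p ∈ S}) = ⟨(x,y), h0⟩ from Subtype.ext e])
  | succ n ih =>
    have hn : (x, y + dy * n) ∈ S := h n (by omega)
    have r1 := ih (fun k hk => h k (by omega)) hn
    have hadj : (latticeGraph.induce S).Adj ⟨(x, y + dy * n), hn⟩ ⟨(x, y + dy * (n + 1 : ℕ)), h1⟩ := by
      show latticeGraph.Adj (x, y + dy * (n : ℕ)) (x, y + dy * ((n + 1 : ℕ) : ℤ))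
      rw [lat_adj_mk]
      push_cast
      rcases hdy with rfl | rfl <;> omega
    exact r1.trans hadj.reachable

lemma reachVgen (x y1 y2 : ℤ)
    (h : ∀ y : ℤ, min y1 y2 ≤ y → y ≤ max y1 y2 → (x, y) ∈ S)
    (h1 : (x, y1) ∈ S) (h2 : (x, y2) ∈ S) :
    (latticeGraph.induce S).Reachable ⟨(x, y1), h1⟩ ⟨(x, y2), h2⟩ := by
  obtain ⟨dy, hdy, heq⟩ : ∃ dy : ℤ, (dy = 1 ∨ dy = -1) ∧ y2 = y1 + dy * (y2 - y1).natAbs := by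
    rcases le_total y1 y2 with h' | h'
    · exact ⟨1, Or.inl rfl, by omega⟩
    · exact ⟨-1, Or.inr rfl, by omega⟩
  have h2' : (x, y1 + dy * (y2 - y1).natAbs) ∈ S := by rw [← heq]; exact h2
  have := reachV (y2 - y1).natAbs x y1 dy hdy
    (fun k hk => h _ (by rcases hdy with rfl | rfl <;> omega) (by rcases hdy with rfl | rfl <;> omega)) h1 h2'
  rwa [show (⟨(x, y1 + dy * (y2 - y1).natAbs), h2'⟩ : {p // p ∈ S}) = ⟨(x, y2), h2⟩ from
    Subtype.ext (by show (x, y1 + dy * ((y2 - y1).natAbs : ℤ)) = (x, y2); rw [← heq])] at this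

lemma reachH (n : ℕ) (x y dx : ℤ) (hdx : dx = 1 ∨ dx = -1)
    (h : ∀ k : ℕ, (k : ℤ) ≤ n → (x + dx * k, y) ∈ S) (h0 : (x, y) ∈ S)
    (h1 : (x + dx * n, y) ∈ S) :
    (latticeGraph.induce S).Reachable ⟨(x, y), h0⟩ ⟨(x + dx * n, y), h1⟩ := by
  induction n with
  | zero =>
    have e : ((x + dx * (0 : ℕ), y) : ℤ × ℤ) = (x, y) := by simp
    exact SimpleGraph.Reachable.refl _ |>.trans (by rw [show (⟨(x + dx * (0:ℕ), y), h1⟩ : {p // p ∈ S}) = ⟨(x,y), h0⟩ from Subtype.ext e])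
  | succ n ih =>
    have hn : (x + dx * n, y) ∈ S := h n (by omega)
    have r1 := ih (fun k hk => h k (by omega)) hn
    have hadj : (latticeGraph.induce S).Adj ⟨(x + dx * n, y), hn⟩ ⟨(x + dx * (n + 1 : ℕ), y), h1⟩ := by
      show latticeGraph.Adj (x + dx * (n : ℕ), y) (x + dx * ((n + 1 : ℕ) : ℤ), y)
      rw [lat_adj_mk]
      push_cast
      rcases hdx with rfl | rfl <;> omega
    exact r1.trans hadj.reachable

lemma reachHgen (y x1 x2 : ℤ)
    (h : ∀ x : ℤ, min x1 x2 ≤ x → x ≤ max x1 x2 → (x, y) ∈ S)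
    (h1 : (x1, y) ∈ S) (h2 : (x2, y) ∈ S) :
    (latticeGraph.induce S).Reachable ⟨(x1, y), h1⟩ ⟨(x2, y), h2⟩ := by
  obtain ⟨dx, hdx, heq⟩ : ∃ dx : ℤ, (dx = 1 ∨ dx = -1) ∧ x2 = x1 + dx * (x2 - x1).natAbs := by
    rcases le_total x1 x2 with h' | h'
    · exact ⟨1, Or.inl rfl, by omega⟩
    · exact ⟨-1, Or.inr rfl, by omega⟩
  have h2' : (x1 + dx * (x2 - x1).natAbs, y) ∈ S := by rw [← heq]; exact h2
  have := reachH (x2 - x1).natAbs x1 y dx hdx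
    (fun k hk => h _ (by rcases hdx with rfl | rfl <;> omega) (by rcases hdx with rfl | rfl <;> omega)) h1 h2'
  rwa [show (⟨(x1 + dx * (x2 - x1).natAbs, y), h2'⟩ : {p // p ∈ S}) = ⟨(x2, y), h2⟩ from
    Subtype.ext (by show (x1 + dx * ((x2 - x1).natAbs : ℤ), y) = (x2, y); rw [← heq])] at this

end

theorem stmt_2 (S : Set (ℤ × ℤ))
    (hPDS : ∀ v ∉ S, ∃! u, u ∈ S ∧ latticeGraph.Adj v u)
    (v : ℤ × ℤ) (hv : v ∈ S) :
    ∃ I J : Set ℤ, I.OrdConnected ∧ J.OrdConnected ∧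
      {w : ℤ × ℤ | ∃ hw : w ∈ S, (latticeGraph.induce S).Reachable ⟨v, hv⟩ ⟨w, hw⟩}
        = I ×ˢ J := by
  have hc : ∀ ⦃p q r : ℤ × ℤ⦄, p ∈ S → q ∈ S → p ≠ q →
      latticeGraph.Adj r p → latticeGraph.Adj r q → r ∈ S := by
    intro p q r hp hq hpq hrp hrq
    by_contra hr
    obtain ⟨u, _, hu⟩ := hPDS r hr
    exact hpq ((hu p ⟨hp, hrp⟩).trans (hu q ⟨hq, hrq⟩).symm)
  set C := {w : ℤ × ℤ | ∃ hw : w ∈ S, (latticeGraph.induce S).Reachable ⟨v, hv⟩ ⟨w, hw⟩} with hC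
  have key : ∀ p, p ∈ C → ∀ q, q ∈ C → ∀ x y : ℤ,
      min p.1 q.1 ≤ x → x ≤ max p.1 q.1 → min p.2 q.2 ≤ y → y ≤ max p.2 q.2 →
      (x, y) ∈ C := by
    intro p hp q hq x y h1 h2 h3 h4
    obtain ⟨hpS, hpr⟩ := hp
    obtain ⟨hqS, hqr⟩ := hq
    obtain ⟨w⟩ := hpr.symm.trans hqr
    have hmem : ∀ x' y' : ℤ, min p.1 q.1 ≤ x' → x' ≤ max p.1 q.1 →
        min p.2 q.2 ≤ y' → y' ≤ max p.2 q.2 → (x', y') ∈ S :=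
      fun x' y' a1 a2 a3 a4 => rectMem hc w x' y' a1 a2 a3 a4
    have hxyS : (x, y) ∈ S := hmem x y h1 h2 h3 h4
    have hmid : (p.1, y) ∈ S := hmem p.1 y (by omega) (by omega) h3 h4
    have hpS' : (p.1, p.2) ∈ S := Prod.mk.eta ▸ hpS
    have r1 : (latticeGraph.induce S).Reachable ⟨(p.1, p.2), hpS'⟩ ⟨(p.1, y), hmid⟩ :=
      reachVgen p.1 p.2 y (fun y' b1 b2 => hmem p.1 y' (by omega) (by omega) (by omega) (by omega)) hpS' hmid
    have r2 : (latticeGraph.induce S).Reachable ⟨(p.1, y), hmid⟩ ⟨(x, y), hxyS⟩ :=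
      reachHgen y p.1 x (fun x' b1 b2 => hmem x' y (by omega) (by omega) h3 h4) hmid hxyS
    have r0 : (latticeGraph.induce S).Reachable ⟨v, hv⟩ ⟨(p.1, p.2), hpS'⟩ := by
      have : (⟨(p.1, p.2), hpS'⟩ : {w // w ∈ S}) = ⟨p, hpS⟩ := Subtype.ext Prod.mk.eta
      rw [this]; exact hpr
    exact ⟨hxyS, (r0.trans r1).trans r2⟩
  refine ⟨Prod.fst '' C, Prod.snd '' C, ?_, ?_, ?_⟩
  · constructor
    rintro x1 ⟨p, hp, rfl⟩ x2 ⟨q, hq, rfl⟩ x hx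
    obtain ⟨hxa, hxb⟩ := hx
    exact ⟨(x, p.2), key p hp q hq x p.2 (by omega) (by omega) (by omega) (by omega), rfl⟩
  · constructor
    rintro y1 ⟨p, hp, rfl⟩ y2 ⟨q, hq, rfl⟩ y hy
    obtain ⟨hya, hyb⟩ := hy
    exact ⟨(p.1, y), key p hp q hq p.1 y (by omega) (by omega) (by omega) (by omega), rfl⟩
  · ext ⟨x, y⟩
    constructor
    · intro hw
      exact ⟨⟨(x, y), hw, rfl⟩, ⟨(x, y), hw, rfl⟩⟩
    · rintro ⟨⟨p, hp, hpx⟩, ⟨q, hq, hqy⟩⟩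
      exact key p hp q hq x y (by omega) (by omega) (by omega) (by omega)
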